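/- arXiv:1805.10613 — 2 statements merged into one kernel-verified Lean document; each statement's English description precedes it below -/
import Mathlib

section
/- Let p be a prime, s ≥ 1, and consider the ring B_s = (ℤ_(p)[v]/(v^{s+1}, pv))[y_1, ..., y_s]/(y_1^p, ..., y_s^p). In the subring A_s generated by the elements p y_i^j and v y_i^j (1 ≤ i ≤ s, 1 ≤ j ≤ p−1), the element x = (v y_1)(v y_2)⋯(v y_s) = v^s y_1 y_2 ⋯ y_s is a nonzero torsion element lying in T^s, where T is the torsion ideal of A_s; in particular T^s ≠ 0. -/
noncomputable section

open scoped Classical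

/-- The ideal `(p) ⊆ ℤ` is prime. -/
instance zp_isPrime (p : ℕ) [Fact p.Prime] : (Ideal.span {(p : ℤ)}).IsPrime :=
  (Ideal.span_singleton_prime (by exact_mod_cast (Fact.out : p.Prime).ne_zero)).mpr
    (Nat.prime_iff_prime_int.mp (Fact.out : p.Prime))

/-- `ℤ_(p)`, the integers localized at the prime `p`. -/
def Zp (p : ℕ) [Fact p.Prime] : Type :=
  Localization.AtPrime (Ideal.span {(p : ℤ)})

instance (p : ℕ) [Fact p.Prime] : CommRing (Zp p) :=
  inferInstanceAs (CommRing (Localization.AtPrime (Ideal.span {(p : ℤ)})))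

set_option synthInstance.maxHeartbeats 1000000
set_option maxHeartbeats 1000000

open MvPolynomial

/-- The coefficient ring `ℤ_(p)[v]/(v^(s+1), pv)`. -/
abbrev Coef10 (p s : ℕ) [Fact p.Prime] : Type :=
  Polynomial (Zp p) ⧸
    Ideal.span {(Polynomial.X : Polynomial (Zp p)) ^ (s + 1),
      (p : Polynomial (Zp p)) * Polynomial.X}

instance (p s : ℕ) [Fact p.Prime] : CommRing (Coef10 p s) :=
  Ideal.Quotient.commRing _

/-- `B_s = (ℤ_(p)[v]/(v^(s+1), pv))[y_1, ..., y_s]/(y_1^p, ..., y_s^p)`. -/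
abbrev B10 (p s : ℕ) [Fact p.Prime] : Type :=
  MvPolynomial (Fin s) (Coef10 p s) ⧸
    Ideal.span (Set.range fun i : Fin s => (X i : MvPolynomial (Fin s) (Coef10 p s)) ^ p)

/-- The class of `y_i` in `B_s`. -/
def y10 (p s : ℕ) [Fact p.Prime] (i : Fin s) : B10 p s :=
  Ideal.Quotient.mk _ (X i : MvPolynomial (Fin s) (Coef10 p s))

/-- The class of `v` in `B_s`. -/
def v10 (p s : ℕ) [Fact p.Prime] : B10 p s :=
  Ideal.Quotient.mk _
    (C (Ideal.Quotient.mk _ (Polynomial.X : Polynomial (Zp p))) :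
      MvPolynomial (Fin s) (Coef10 p s))

/-- `A_s ⊆ B_s`: the `ℤ_(p)`-subalgebra generated by the `p y_i^j` and `v y_i^j`. -/
def A10 (p s : ℕ) [Fact p.Prime] : Subalgebra (Zp p) (B10 p s) :=
  Algebra.adjoin (Zp p)
    {x | ∃ (i : Fin s) (j : ℕ), 1 ≤ j ∧ j ≤ p - 1 ∧
      (x = (p : B10 p s) * y10 p s i ^ j ∨ x = v10 p s * y10 p s i ^ j)}

/-- The torsion ideal `T` of `A_s`: the ideal generated by all additive torsion elements. -/
def T10 (p s : ℕ) [Fact p.Prime] : Ideal (A10 p s) :=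
  Ideal.span {a : A10 p s | ∃ m : ℤ, m ≠ 0 ∧ m • a = 0}

def zmodHom (p : ℕ) [Fact p.Prime] : Zp p →+* ZMod p :=
  IsLocalization.lift (S := Localization.AtPrime (Ideal.span {(p : ℤ)}))
    (M := (Ideal.span {(p : ℤ)}).primeCompl)
    (g := Int.castRingHom (ZMod p)) (by
      intro x
      have hx : ¬ ((p : ℤ) ∣ x.1) := fun h => x.2 (Ideal.mem_span_singleton.mpr h)
      have h2 : ((x.1 : ℤ) : ZMod p) ≠ 0 := by
        simpa [ZMod.intCast_zmod_eq_zero_iff_dvd] using hx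
      simpa [isUnit_iff_ne_zero] using h2)

lemma zmodHom_int (p : ℕ) [Fact p.Prime] (n : ℤ) :
    zmodHom p (algebraMap ℤ (Localization.AtPrime (Ideal.span {(p : ℤ)})) n) = (n : ZMod p) := by
  exact IsLocalization.lift_eq (S := Localization.AtPrime (Ideal.span {(p : ℤ)}))
    (M := (Ideal.span {(p : ℤ)}).primeCompl) _ n

abbrev DQ (p s : ℕ) [Fact p.Prime] : Type :=
  Polynomial (ZMod p) ⧸ Ideal.span {(Polynomial.X : Polynomial (ZMod p)) ^ (s + 1)}

def coefHom (p s : ℕ) [Fact p.Prime] : Coef10 p s →+* DQ p s :=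
  Ideal.Quotient.lift _
    ((Ideal.Quotient.mk _).comp (Polynomial.mapRingHom (zmodHom p))) (by
      intro a ha
      rw [← RingHom.mem_ker]
      refine Ideal.span_le.mpr ?_ ha
      rintro g hg
      simp only [Set.mem_insert_iff, Set.mem_singleton_iff] at hg
      rcases hg with rfl | rfl
      · show Ideal.Quotient.mk _ (Polynomial.map (zmodHom p) _) = 0
        rw [Ideal.Quotient.eq_zero_iff_mem]
        simp only [Polynomial.map_pow, Polynomial.map_X]
        exact Ideal.subset_span rfl
      · show Ideal.Quotient.mk _ (Polynomial.map (zmodHom p) _) = 0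
        simp [CharP.cast_eq_zero])

lemma vbar_pow_ne (p s : ℕ) [Fact p.Prime] :
    ((Ideal.Quotient.mk _ Polynomial.X : Coef10 p s)) ^ s ≠ 0 := by
  intro h
  have h2 := congrArg (coefHom p s) h
  have h3 : coefHom p s ((Ideal.Quotient.mk _ Polynomial.X : Coef10 p s)) =
      Ideal.Quotient.mk _ (Polynomial.X : Polynomial (ZMod p)) := by
    simp [coefHom]
  rw [map_pow, h3, map_zero, ← map_pow, Ideal.Quotient.eq_zero_iff_mem,
    Ideal.mem_span_singleton] at h2
  have := Polynomial.natDegree_le_of_dvd h2 (pow_ne_zero _ Polynomial.X_ne_zero)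
  simp [Polynomial.natDegree_X_pow] at this

open MvPolynomial

lemma pv_zero (p s : ℕ) [Fact p.Prime] : (p : B10 p s) * v10 p s = 0 := by
  have h : ((p : Coef10 p s)) * (Ideal.Quotient.mk _ Polynomial.X) = 0 := by
    rw [← map_natCast (Ideal.Quotient.mk _) p, ← map_mul, Ideal.Quotient.eq_zero_iff_mem]
    exact Ideal.subset_span (by simp)
  show (p : B10 p s) * Ideal.Quotient.mk _ (C (Ideal.Quotient.mk _ Polynomial.X)) = 0
  rw [← map_natCast (Ideal.Quotient.mk _) p, ← map_mul,
    ← map_natCast (C : Coef10 p s →+* MvPolynomial (Fin s) (Coef10 p s)), ← map_mul, h,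
    map_zero, map_zero]

lemma prod_ne (p s : ℕ) [Fact p.Prime] (_hs : 1 ≤ s) :
    v10 p s ^ s * ∏ i : Fin s, y10 p s i ≠ 0 := by
  classical
  set c : Coef10 p s := (Ideal.Quotient.mk _ Polynomial.X) ^ s with hc
  have hcne : c ≠ 0 := vbar_pow_ne p s
  set d : Fin s →₀ ℕ := ∑ i : Fin s, Finsupp.single i 1 with hd
  have hdi : ∀ i : Fin s, d i = 1 := by
    intro i
    rw [hd, Finsupp.finset_sum_apply]
    simp [Finsupp.single_apply]
  have hq : (C c * ∏ i : Fin s, X i : MvPolynomial (Fin s) (Coef10 p s)) = monomial d c := by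
    rw [monomial_eq]
    congr 1
    have hsup : d.support = Finset.univ := by
      ext i; simp [Finsupp.mem_support_iff, hdi i]
    rw [Finsupp.prod, hsup]
    exact (Finset.prod_congr rfl fun i _ => by rw [hdi i, pow_one]).symm
  -- the element equals mk of the monomial
  have hel : v10 p s ^ s * ∏ i : Fin s, y10 p s i =
      Ideal.Quotient.mk _ (monomial d c : MvPolynomial (Fin s) (Coef10 p s)) := by
    rw [← hq, map_mul, map_prod, hc, map_pow, map_pow]
    rfl
  rw [hel, Ne, Ideal.Quotient.eq_zero_iff_mem]
  intro hmem
  have hrange : (Set.range fun i : Fin s => (X i : MvPolynomial (Fin s) (Coef10 p s)) ^ p)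
      = (fun m => monomial m (1 : Coef10 p s)) '' Set.range (fun i : Fin s => Finsupp.single i p) := by
    rw [← Set.range_comp]
    refine congrArg _ (funext fun i => ?_)
    exact X_pow_eq_monomial
  rw [hrange, mem_ideal_span_monomial_image] at hmem
  have hds : d ∈ (monomial d c : MvPolynomial (Fin s) (Coef10 p s)).support := by
    rw [support_monomial, if_neg hcne]; exact Finset.mem_singleton_self d
  obtain ⟨m, ⟨i, rfl⟩, hle⟩ := hmem d hds
  have := Finsupp.single_le_iff.mp hle
  rw [hdi i] at this
  have hp2 := (Fact.out : p.Prime).two_le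
  omega


/-- for `s ≥ 1`, the element `x = (v y_1)(v y_2)⋯(v y_s) = v^s y_1⋯y_s`
is a nonzero `p`-torsion element of `A_s` lying in `T^s`; in particular `T^s ≠ 0`. -/
theorem statement10 (p s : ℕ) [Fact p.Prime] (hs : 1 ≤ s) :
    (∏ i : Fin s, (v10 p s * y10 p s i)) = v10 p s ^ s * ∏ i : Fin s, y10 p s i ∧
    (∏ i : Fin s, (v10 p s * y10 p s i)) ≠ 0 ∧
    (p : ℤ) • (∏ i : Fin s, (v10 p s * y10 p s i)) = 0 ∧
    (∀ i : Fin s, v10 p s * y10 p s i ∈ A10 p s ∧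
      (∃ m : ℤ, m ≠ 0 ∧ m • (v10 p s * y10 p s i) = 0)) ∧
    (∃ hx : (∏ i : Fin s, (v10 p s * y10 p s i)) ∈ A10 p s,
      (⟨_, hx⟩ : A10 p s) ∈ T10 p s ^ s) ∧
    T10 p s ^ s ≠ ⊥ := by
  have hp2 := (Fact.out : p.Prime).two_le
  have hpz : (p : ℤ) ≠ 0 := by exact_mod_cast (Fact.out : p.Prime).ne_zero
  have heq : (∏ i : Fin s, (v10 p s * y10 p s i)) = v10 p s ^ s * ∏ i : Fin s, y10 p s i := by
    rw [Finset.prod_mul_distrib, Finset.prod_const, Finset.card_univ, Fintype.card_fin]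
  have hpv : ∀ x : B10 p s, (p : ℤ) • (v10 p s * x) = 0 := by
    intro x
    rw [zsmul_eq_mul, Int.cast_natCast, ← mul_assoc, mul_comm (p : B10 p s) (v10 p s),
      mul_comm (v10 p s) (p : B10 p s), pv_zero, zero_mul]
  have hne : (∏ i : Fin s, (v10 p s * y10 p s i)) ≠ 0 := heq ▸ prod_ne p s hs
  have hpt : (p : ℤ) • (∏ i : Fin s, (v10 p s * y10 p s i)) = 0 := by
    have h2 : v10 p s * v10 p s ^ (s - 1) = v10 p s ^ s := by
      rw [← pow_succ', show s - 1 + 1 = s from by omega]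
    rw [heq, ← h2, mul_assoc]
    exact hpv _
  have hmemA : ∀ i : Fin s, v10 p s * y10 p s i ∈ A10 p s := fun i =>
    Algebra.subset_adjoin ⟨i, 1, le_refl 1, by omega, Or.inr (by rw [pow_one])⟩
  set tt : Fin s → A10 p s := fun i => ⟨v10 p s * y10 p s i, hmemA i⟩ with htt
  have httor : ∀ i : Fin s, (p : ℤ) • tt i = 0 := by
    intro i
    apply Subtype.ext
    show (p : ℤ) • (v10 p s * y10 p s i) = 0
    exact hpv _
  have hT : ∀ i : Fin s, tt i ∈ T10 p s := fun i =>
    Ideal.subset_span ⟨(p : ℤ), hpz, httor i⟩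
  have hprodT : (∏ i : Fin s, tt i) ∈ T10 p s ^ s := by
    have := Ideal.prod_mem_prod (s := Finset.univ) (I := fun _ => T10 p s) (x := tt) (fun i (_ : i ∈ Finset.univ) => hT i)
    rwa [Finset.prod_const, Finset.card_univ, Fintype.card_fin] at this
  have hx : (∏ i : Fin s, (v10 p s * y10 p s i)) ∈ A10 p s := by
    have : ((∏ i : Fin s, tt i : A10 p s) : B10 p s) = ∏ i : Fin s, (v10 p s * y10 p s i) := by
      exact map_prod (A10 p s).val tt Finset.univ
    exact this ▸ (∏ i : Fin s, tt i).2
  have hsub : (⟨_, hx⟩ : A10 p s) = ∏ i : Fin s, tt i := by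
    apply Subtype.ext
    show (∏ i : Fin s, (v10 p s * y10 p s i)) = _
    exact Eq.symm (map_prod (A10 p s).val tt Finset.univ)
  refine ⟨heq, hne, hpt, fun i => ⟨hmemA i, ⟨(p : ℤ), hpz, hpv _⟩⟩, ⟨hx, ?_⟩, ?_⟩
  · rw [hsub]; exact hprodT
  · intro hbot
    rw [hbot, Ideal.mem_bot] at hprodT
    have : ((∏ i : Fin s, tt i : A10 p s) : B10 p s) = 0 := by rw [hprodT]; rfl
    rw [show ((∏ i : Fin s, tt i : A10 p s) : B10 p s) = ∏ i : Fin s, (v10 p s * y10 p s i) from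
      map_prod (A10 p s).val tt Finset.univ] at this
    exact hne this
end
end

section
/- Let A = ℤ_(2)[h, c_1, ..., c_{n-1}]/(h^{d+1}, h^{d_i} c_i, 2c_i, c_i c_j : 1 ≤ i, j ≤ n−1) for integers d ≥ 1 and d_1 ≥ ... ≥ d_{n-1} ≥ 1. Then the set T of torsion elements of A is the ideal generated by c_1, ..., c_{n-1}, and T² = 0. -/
noncomputable section

open scoped Classical

instance ZpDomain (p : ℕ) [Fact p.Prime] : IsDomain (Zp p) :=
  inferInstanceAs (IsDomain (Localization.AtPrime (Ideal.span {(p : ℤ)})))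
instance ZpCharZero (p : ℕ) [Fact p.Prime] : CharZero (Zp p) := by
  have h : CharZero (Localization.AtPrime (Ideal.span {(p:ℤ)})) :=
    charZero_of_injective_algebraMap
      (IsLocalization.injective _ (Ideal.span {(p:ℤ)}).primeCompl_le_nonZeroDivisors)
  exact h

open MvPolynomial

/-- let `A = ℤ_(2)[h, c_1, ..., c_(n-1)]/(h^(d+1), h^(d_i) c_i, 2c_i, c_i c_j)`
with `d ≥ 1` and `d_1 ≥ ... ≥ d_(n-1) ≥ 1`.  Then the torsion elements of `A` form exactly
the ideal `T` generated by `c_1, ..., c_(n-1)`, and `T² = 0`.  (Here `h = X 0`, `c_k = X k`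
for `k ≠ 0`.) -/
theorem statement12 (n : ℕ) [NeZero n] (hn : 2 ≤ n) (d : ℕ) (hd : 1 ≤ d)
    (dd : Fin n → ℕ) (hdd1 : ∀ i : Fin n, i ≠ 0 → 1 ≤ dd i)
    (hdd2 : ∀ i j : Fin n, i ≠ 0 → j ≠ 0 → i ≤ j → dd j ≤ dd i) :
    ∀ rel : Ideal (MvPolynomial (Fin n) (Zp 2)),
      rel = Ideal.span
        ({(X 0 : MvPolynomial (Fin n) (Zp 2)) ^ (d + 1)} ∪
         {x | ∃ i : Fin n, i ≠ 0 ∧ x = (X 0) ^ (dd i) * X i} ∪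
         {x | ∃ i : Fin n, i ≠ 0 ∧ x = 2 * X i} ∪
         {x | ∃ i j : Fin n, i ≠ 0 ∧ j ≠ 0 ∧ x = X i * X j}) →
      ∀ T : Ideal (MvPolynomial (Fin n) (Zp 2) ⧸ rel),
        T = Ideal.span ((fun i => Ideal.Quotient.mk rel (X i)) '' {i : Fin n | i ≠ 0}) →
        (∀ x : MvPolynomial (Fin n) (Zp 2) ⧸ rel,
          (∃ m : ℤ, m ≠ 0 ∧ m • x = 0) ↔ x ∈ T) ∧
        T ^ 2 = ⊥ := by
  intro rel hrel T hT
  set R := Zp 2 with hR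
  set I : Ideal (MvPolynomial (Fin n) R) := Ideal.span (X '' {i : Fin n | i ≠ 0}) with hI
  set S : Set (Fin n →₀ ℕ) :=
    ((fun i : Fin n => Finsupp.single i 1) '' {i : Fin n | i ≠ 0}) ∪ {Finsupp.single 0 (d+1)}
    with hS
  set J : Ideal (MvPolynomial (Fin n) R) :=
    Ideal.span ((fun s => monomial s (1 : R)) '' S) with hJ
  have hXmon : ∀ i : Fin n, (X i : MvPolynomial (Fin n) R) = monomial (Finsupp.single i 1) 1 := by
    intro i; rw [← X_pow_eq_monomial, pow_one]
  -- X i ∈ J for i ≠ 0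
  have hXJ : ∀ i : Fin n, i ≠ 0 → (X i : MvPolynomial (Fin n) R) ∈ J := by
    intro i hi
    rw [hXmon i]
    exact Ideal.subset_span ⟨Finsupp.single i 1, Or.inl ⟨i, hi, rfl⟩, rfl⟩
  -- rel ≤ J
  have relJ : rel ≤ J := by
    rw [hrel]
    apply Ideal.span_le.mpr
    rintro x (((hx | ⟨i, hi, rfl⟩) | ⟨i, hi, rfl⟩) | ⟨i, j, hi, hj, rfl⟩)
    · rcases hx with rfl
      rw [X_pow_eq_monomial]
      exact Ideal.subset_span ⟨Finsupp.single 0 (d+1), Or.inr rfl, rfl⟩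
    · exact Ideal.mul_mem_left _ _ (hXJ i hi)
    · exact Ideal.mul_mem_left _ _ (hXJ i hi)
    · exact Ideal.mul_mem_left _ _ (hXJ j hj)
  -- J ≤ I ⊔ rel
  have hJle : J ≤ I ⊔ rel := by
    rw [hJ]
    apply Ideal.span_le.mpr
    rintro x ⟨s, hs | rfl, rfl⟩
    · rcases hs with ⟨i, hi, rfl⟩
      exact Ideal.mem_sup_left (Ideal.subset_span ⟨i, hi, (hXmon i).symm⟩)
    · refine Ideal.mem_sup_right ?_
      show (monomial (Finsupp.single (0 : Fin n) (d+1)) (1:R)) ∈ rel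
      rw [← X_pow_eq_monomial, hrel]
      exact Ideal.subset_span (Or.inl (Or.inl (Or.inl rfl)))
  -- I ⊔ rel ≤ J
  have hleJ : I ⊔ rel ≤ J := by
    refine sup_le ?_ relJ
    rw [hI]
    apply Ideal.span_le.mpr
    rintro x ⟨i, hi, rfl⟩
    exact hXJ i hi
  -- T = I.map mk
  have hT' : T = I.map (Ideal.Quotient.mk rel) := by
    rw [hT, hI, Ideal.map_span, Set.image_image]
  constructor
  · intro x
    constructor
    · rintro ⟨m, hm, hmx⟩
      obtain ⟨p, rfl⟩ := Ideal.Quotient.mk_surjective x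
      have h1 : (m • p) ∈ rel := by
        rw [← Ideal.Quotient.eq_zero_iff_mem, map_zsmul]
        exact hmx
      have h2 := relJ h1
      rw [hJ, mem_ideal_span_monomial_image] at h2
      have hpJ : p ∈ J := by
        rw [hJ, mem_ideal_span_monomial_image]
        intro xi hxi
        refine h2 xi ?_
        rw [mem_support_iff] at hxi ⊢
        rw [coeff_smul, zsmul_eq_mul]
        exact mul_ne_zero (by exact_mod_cast hm) hxi
      rw [hT']
      exact Ideal.mem_quotient_iff_mem_sup.mpr ((sup_comm I rel) ▸ hJle hpJ)
    · intro hx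
      refine ⟨2, two_ne_zero, ?_⟩
      have h2x : (2 : MvPolynomial (Fin n) R ⧸ rel) * x = 0 := by
        rw [hT] at hx
        refine Submodule.span_induction ?_ (by simp) ?_ ?_ hx
        · rintro y ⟨i, hi, rfl⟩
          have : (2 : MvPolynomial (Fin n) R ⧸ rel) * Ideal.Quotient.mk rel (X i)
              = Ideal.Quotient.mk rel (2 * X i) := by
            rw [map_mul, map_ofNat]
          rw [this, Ideal.Quotient.eq_zero_iff_mem, hrel]
          exact Ideal.subset_span (Or.inl (Or.inr ⟨i, hi, rfl⟩))
        · intro a b _ _ ha hb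
          rw [mul_add, ha, hb, add_zero]
        · intro a b _ hb
          rw [smul_eq_mul, mul_left_comm, hb, mul_zero]
      rw [zsmul_eq_mul]
      exact_mod_cast h2x
  · have hII : I * I ≤ rel := by
      rw [hI, Ideal.span_mul_span']
      apply Ideal.span_le.mpr
      rintro x ⟨a, ⟨i, hi, rfl⟩, b, ⟨j, hj, rfl⟩, rfl⟩
      rw [hrel]
      exact Ideal.subset_span (Or.inr ⟨i, j, hi, hj, rfl⟩)
    have h := Ideal.map_mono (f := Ideal.Quotient.mk rel) hII
    rw [Ideal.map_quotient_self] at h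
    rw [hT', pow_two, ← Ideal.map_mul]
    exact le_bot_iff.mp h
end
end
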